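/- Let 𝓜 : ℝ^m → ℝ^m be a Σ∆ map with input x ∈ ℝ. Suppose Γ₀ ⊆ ℝ^m is a bounded set with 𝓜(Γ₀) ⊆ Γ₀, and define Γ = ⋂_{k ≥ 0} 𝓜^k(Γ₀). If Γ₀ contains a ℤ^m-tile, then Γ contains a ℤ^m-tile. -/

import Mathlib

open MeasureTheory

noncomputable section

/-- The m×m lower-triangular matrix of ones: `L i j = 1` iff `j ≤ i`. -/
def Lmat (m : ℕ) : Matrix (Fin m) (Fin m) ℝ :=
  fun i j => if j ≤ i then 1 else 0

/-- A Σ∆ map with input `x`: a piecewise affine map `v ↦ L v + x 𝟏 + d_i` on a finite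
partition `Ω_1, …, Ω_K` of `ℝ^m`, with integer translation vectors `d_i`. -/
def IsSigmaDeltaMap (m : ℕ) (x : ℝ) (M : (Fin m → ℝ) → (Fin m → ℝ)) : Prop :=
  ∃ (K : ℕ) (Ω : Fin K → Set (Fin m → ℝ)) (d : Fin K → (Fin m → ℤ)),
    (∀ v, ∃! i, v ∈ Ω i) ∧
    ∀ i, ∀ v ∈ Ω i, M v = (Lmat m).mulVec v + (fun _ => x) + (fun j => (d i j : ℝ))

/-- `S ⊆ ℝ^m` is a `ℤ^m`-tile: its integer translates partition `ℝ^m`, i.e. every point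
lies in exactly one translate `S + k`, `k ∈ ℤ^m`. -/
def IsTile (m : ℕ) (S : Set (Fin m → ℝ)) : Prop :=
  ∀ v : Fin m → ℝ, ∃! k : Fin m → ℤ, (v - fun j => (k j : ℝ)) ∈ S

lemma Lmat_det (m : ℕ) : (Lmat m).det = 1 := by
  rw [Matrix.det_of_lowerTriangular (Lmat m) ?_]
  · simp [Lmat]
  · intro i j h
    simp only [Lmat, ite_eq_right_iff]
    intro hji
    exact absurd hji (not_le.2 h)

lemma Lmat_mulVec_int (m : ℕ) (k : Fin m → ℤ) :
    (Lmat m).mulVec (fun j => (k j : ℝ)) =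
      fun i => ((∑ j, if j ≤ i then k j else 0 : ℤ) : ℝ) := by
  funext i
  simp [Matrix.mulVec, Lmat, dotProduct, ite_mul, apply_ite (Int.cast : ℤ → ℝ)]

/-- surjectivity mod ℤ^m of one application of M -/
lemma step_surj (m : ℕ) (x : ℝ) (M : (Fin m → ℝ) → (Fin m → ℝ))
    (hM : IsSigmaDeltaMap m x M) (S : Set (Fin m → ℝ))
    (hS : ∀ v : Fin m → ℝ, ∃ k : Fin m → ℤ, (v - fun j => (k j : ℝ)) ∈ S) :
    ∀ v : Fin m → ℝ, ∃ k : Fin m → ℤ, (v - fun j => (k j : ℝ)) ∈ M '' S := by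
  obtain ⟨K, Ω, d, hpart, hMdef⟩ := hM
  intro v
  have hdet : IsUnit (Lmat m).det := by rw [Lmat_det]; exact isUnit_one
  set u := (Lmat m)⁻¹.mulVec (v - fun _ => x) with hu
  have hLu : (Lmat m).mulVec u = v - fun _ => x := by
    rw [hu, Matrix.mulVec_mulVec, Matrix.mul_nonsing_inv _ hdet, Matrix.one_mulVec]
  obtain ⟨k0, hk0⟩ := hS u
  obtain ⟨i, hi, -⟩ := hpart (u - fun j => (k0 j : ℝ))
  refine ⟨fun j => (∑ j', if j' ≤ j then k0 j' else 0) - d i j, _, hk0, ?_⟩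
  rw [hMdef i _ hi]
  have h1 : (Lmat m).mulVec (u - fun j => (k0 j : ℝ)) =
      (Lmat m).mulVec u - (Lmat m).mulVec (fun j => (k0 j : ℝ)) :=
    Matrix.mulVec_sub _ _ _
  funext j
  have h2 := congrFun (Lmat_mulVec_int m k0) j
  have h3 := congrFun hLu j
  have h4 := congrFun h1 j
  simp only [Pi.add_apply, Pi.sub_apply] at *
  rw [h4, h2, h3]
  push_cast
  ring

/-- finiteness of integer translates landing in a bounded set -/
lemma finite_fibers (m : ℕ) (Γ₀ : Set (Fin m → ℝ)) (hbdd : Bornology.IsBounded Γ₀)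
    (v : Fin m → ℝ) :
    {k : Fin m → ℤ | (v - fun j => (k j : ℝ)) ∈ Γ₀}.Finite := by
  obtain ⟨r, hr⟩ := hbdd.subset_closedBall 0
  refine Set.Finite.subset
    (Set.Finite.pi (fun j : Fin m => Set.finite_Icc (⌈v j - r⌉) (⌊v j + r⌋))) ?_
  intro k hk
  have hmem := hr hk
  rw [Metric.mem_closedBall, dist_zero_right] at hmem
  intro j _
  have h1 : ‖(v - fun j => (k j : ℝ)) j‖ ≤ r :=
    (norm_le_pi_norm _ j).trans hmem
  simp only [Pi.sub_apply, Real.norm_eq_abs, abs_le] at h1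
  constructor
  · exact Int.ceil_le.2 (by linarith [h1.2])
  · exact Int.le_floor.2 (by linarith [h1.1])

/-- if `Γ₀` is bounded, positively invariant under a Σ∆ map `M`, and contains
a `ℤ^m`-tile, then `Γ = ⋂_{k ≥ 0} M^k(Γ₀)` contains a `ℤ^m`-tile. -/
theorem sigma_delta_invariant_set_contains_tile (m : ℕ) (hm : 1 ≤ m) (x : ℝ)
    (M : (Fin m → ℝ) → (Fin m → ℝ)) (hM : IsSigmaDeltaMap m x M)
    (Γ₀ : Set (Fin m → ℝ)) (hbdd : Bornology.IsBounded Γ₀)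
    (hinv : M '' Γ₀ ⊆ Γ₀)
    (htile : ∃ T, IsTile m T ∧ T ⊆ Γ₀) :
    ∃ T, IsTile m T ∧ T ⊆ ⋂ k : ℕ, M^[k] '' Γ₀ := by
  obtain ⟨T0, hT0, hT0sub⟩ := htile
  -- every point has integer translate in each iterate image
  have hsurj : ∀ n : ℕ, ∀ v : Fin m → ℝ, ∃ k : Fin m → ℤ,
      (v - fun j => (k j : ℝ)) ∈ M^[n] '' Γ₀ := by
    intro n
    induction n with
    | zero =>
      intro v
      obtain ⟨k, hk, -⟩ := hT0 v
      exact ⟨k, by simpa using hT0sub hk⟩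
    | succ n ih =>
      have := step_surj m x M hM (M^[n] '' Γ₀) ih
      intro v
      obtain ⟨k, hk⟩ := this v
      refine ⟨k, ?_⟩
      rw [Function.iterate_succ', Set.image_comp]
      exact hk
  -- antitone
  have hanti : ∀ n : ℕ, M^[n+1] '' Γ₀ ⊆ M^[n] '' Γ₀ := by
    intro n
    rw [Function.iterate_succ, Set.image_comp]
    exact Set.image_mono hinv
  have hanti' : Antitone (fun n => M^[n] '' Γ₀) :=
    antitone_nat_of_succ_le hanti
  -- every point has a single integer translate in ALL iterate images
  have hrep : ∀ v : Fin m → ℝ, ∃ k : Fin m → ℤ,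
      (v - fun j => (k j : ℝ)) ∈ ⋂ n : ℕ, M^[n] '' Γ₀ := by
    intro v
    set A : ℕ → Set (Fin m → ℤ) :=
      fun n => {k | (v - fun j => (k j : ℝ)) ∈ M^[n] '' Γ₀} with hA
    have hA0fin : (A 0).Finite := by
      have : A 0 = {k | (v - fun j => (k j : ℝ)) ∈ Γ₀} := by simp [hA]
      rw [this]; exact finite_fibers m Γ₀ hbdd v
    have hAne : ∀ n, (A n).Nonempty := fun n => hsurj n v
    have hAanti : Antitone A := fun a b hab k hk => hanti' hab hk
    by_contra hcon
    push_neg at hcon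
    have : ∀ k : Fin m → ℤ, ∃ n, k ∉ A n := by
      intro k
      by_contra h
      push_neg at h
      exact hcon k (Set.mem_iInter.2 fun n => h n)
    choose f hf using this
    set N := hA0fin.toFinset.sup f with hN
    obtain ⟨k, hk⟩ := hAne N
    have hk0 : k ∈ A 0 := hAanti (Nat.zero_le N) hk
    have hfk : f k ≤ N := Finset.le_sup (hA0fin.mem_toFinset.2 hk0)
    exact hf k (hAanti hfk hk)
  choose c hc using hrep
  -- floor function and fractional part
  set fr : (Fin m → ℝ) → (Fin m → ℝ) :=
    fun v => v - fun j => ((⌊v j⌋ : ℤ) : ℝ) with hfr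
  -- the tile
  refine ⟨Set.range (fun v => fr v - fun j => ((c (fr v)) j : ℝ)), ?_, ?_⟩
  · intro w
    refine ⟨(fun j => ⌊w j⌋) + c (fr w), ?_, ?_⟩
    · refine ⟨w, ?_⟩
      funext j
      simp only [hfr, Pi.sub_apply, Pi.add_apply, ← Int.self_sub_floor]
      push_cast
      ring
    · rintro k' ⟨v', hv'⟩
      -- w - k' = fr v' - c (fr v')
      set b : Fin m → ℤ := fun j => k' j - (c (fr v')) j with hb
      have hwb : ∀ j, w j - (b j : ℝ) = fr v' j := by
        intro j
        have := congrFun hv' j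
        simp only [Pi.sub_apply] at this
        simp only [hb]
        push_cast
        linarith [this]
      have hbfl : ∀ j, b j = ⌊w j⌋ := by
        intro j
        have h1 : (fr v') j = Int.fract (v' j) := by simp only [hfr, Pi.sub_apply, Int.self_sub_floor]
        have h2 : (0:ℝ) ≤ w j - b j := by rw [hwb j, h1]; exact Int.fract_nonneg _
        have h3 : w j - b j < 1 := by rw [hwb j, h1]; exact Int.fract_lt_one _
        symm
        rw [Int.floor_eq_iff]
        constructor <;> push_cast <;> linarith
      have hfrv : fr v' = fr w := by
        funext j
        have := hwb j
        rw [hbfl j] at this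
        simp only [hfr, Pi.sub_apply] at this ⊢
        linarith
      funext j
      have : k' j = b j + (c (fr v')) j := by simp [hb]
      rw [this, hbfl j, hfrv]
      simp
  · rintro _ ⟨v, rfl⟩
    exact hc (fr v)
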